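/- Let x₁, x₂ ∈ ℝ be distinct and let (ã_n)_{n∈ℤ}, (b̃_n)_{n∈ℤ} be real sequences with ã_n ≥ 0. Then the three conditions (i) ã_n ã_{n+1} = 0 for all n, (ii) ã_n = ã_{n−1} = 0 ⟹ b̃_n ∈ {x₁, x₂}, (iii) ã_n ≠ 0 ⟹ (b̃_n + b̃_{n+1} = x₁ + x₂ and b̃_n b̃_{n+1} − ã_n² = x₁x₂), hold if and only if for all n: ã_n² + ã_{n-1}² + (b̃_n − x₁)(b̃_n − x₂) = 0, ã_n(b̃_n + b̃_{n+1} − x₁ − x₂) = 0, and ã_n ã_{n+1} = 0. -/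
import Mathlib


/-- Equivalence of the block description (1×1 and 2×2 blocks with eigenvalues among `{x₁, x₂}`)
and the matrix-entry description of two-sided Jacobi parameters `(ã, b̃)` with
`(J̃ - x₁)(J̃ - x₂) = 0`. -/
theorem stmt14 (x₁ x₂ : ℝ) (hx : x₁ ≠ x₂) (a b : ℤ → ℝ) (ha : ∀ n, 0 ≤ a n) :
    ((∀ n, a n * a (n + 1) = 0) ∧
     (∀ n, a n = 0 → a (n - 1) = 0 → b n = x₁ ∨ b n = x₂) ∧
     (∀ n, a n ≠ 0 →
        b n + b (n + 1) = x₁ + x₂ ∧ b n * b (n + 1) - a n ^ 2 = x₁ * x₂)) ↔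
    (∀ n, a n ^ 2 + a (n - 1) ^ 2 + (b n - x₁) * (b n - x₂) = 0 ∧
      a n * (b n + b (n + 1) - x₁ - x₂) = 0 ∧
      a n * a (n + 1) = 0) := by
  have key : ∀ n : ℤ, n - 1 + 1 = n := fun n => by ring
  constructor
  · rintro ⟨h1, h2, h3⟩ n
    refine ⟨?_, ?_, h1 n⟩
    · rcases eq_or_ne (a n) 0 with hn | hn
      · rcases eq_or_ne (a (n - 1)) 0 with hm | hm
        · rcases h2 n hn hm with h | h <;> rw [hn, hm, h] <;> ring
        · obtain ⟨hs, hp⟩ := h3 (n - 1) hm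
          rw [key] at hs hp
          rw [hn]
          linear_combination b n * hs - hp
      · have hm : a (n - 1) = 0 := by
          have := h1 (n - 1)
          rw [key] at this
          rcases mul_eq_zero.mp this with h | h
          · exact h
          · exact absurd h hn
        obtain ⟨hs, hp⟩ := h3 n hn
        rw [hm]
        linear_combination b n * hs - hp
    · rcases eq_or_ne (a n) 0 with hn | hn
      · rw [hn]; ring
      · obtain ⟨hs, _⟩ := h3 n hn
        rw [hs]; ring
  · intro h
    refine ⟨fun n => (h n).2.2, ?_, ?_⟩
    · intro n hn hm
      have h1 := (h n).1
      rw [hn, hm] at h1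
      have h0 : (b n - x₁) * (b n - x₂) = 0 := by nlinarith [h1]
      rcases mul_eq_zero.mp h0 with h | h
      · left; linarith
      · right; linarith
    · intro n hn
      have hs : b n + b (n + 1) = x₁ + x₂ := by
        rcases mul_eq_zero.mp (h n).2.1 with h | h
        · exact absurd h hn
        · linarith
      refine ⟨hs, ?_⟩
      have hn1 : a (n + 1) = 0 := by
        rcases mul_eq_zero.mp (h n).2.2 with h | h
        · exact absurd h hn
        · exact h
      have h1 := (h (n + 1)).1
      rw [show (n : ℤ) + 1 - 1 = n by ring, hn1] at h1
      linear_combination b (n + 1) * hs - h1
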